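/- Noise-matrix error term in variance-weighted ridge regression (deterministic version of Lemma C.5): Let d, K ≥ 1 be integers, and let H > 0, E > 0, L ≥ 0, λ ≥ 0, κ > 0 be reals with K ≥ √2·L/√(d·κ). Let x₁,…,x_K ∈ ℝ^d with ‖x_τ‖₂ ≤ 1, reals σ_τ ≥ 1 and v_τ with |v_τ| ≤ H for each τ, ψ ∈ ℝ^d with ‖ψ‖₂ ≤ L, and φ ∈ ℝ^d with ‖φ‖₂ ≤ 1. Set Â := Σ_{τ=1}^K x_τ x_τᵀ/σ_τ² + λ·I_d, let N be a real symmetric positive semidefinite d×d matrix with ‖N‖ ≤ E, and set Λ̃ := Â + N. If λ_min(Â) ≥ K·κ/(2H²), then |φᵀ(Â⁻¹ − Λ̃⁻¹)(Σ_{τ=1}^K x_τ·v_τ/σ_τ² + ψ)| ≤ 4√2·H⁴·E·√d/(κ^{3/2}·K). -/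

import Mathlib

open Matrix

/-- Spectral norm (ℓ2→ℓ2 operator norm) of a real square matrix. -/
noncomputable def specNorm {d : ℕ} (M : Matrix (Fin d) (Fin d) ℝ) : ℝ :=
  ‖(Matrix.toEuclideanCLM (𝕜 := ℝ) M :
      EuclideanSpace ℝ (Fin d) →L[ℝ] EuclideanSpace ℝ (Fin d))‖

/-- The weighted regularized Gram matrix `Â = Σ_τ x_τ x_τᵀ/σ_τ² + λ I`. -/
noncomputable def gramHat {d K : ℕ} (x : Fin K → Fin d → ℝ) (σ : Fin K → ℝ)
    (lam : ℝ) : Matrix (Fin d) (Fin d) ℝ :=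
  (∑ τ, (σ τ ^ 2)⁻¹ • Matrix.vecMulVec (x τ) (x τ)) +
    lam • (1 : Matrix (Fin d) (Fin d) ℝ)

lemma enorm_eq {d : ℕ} (y : Fin d → ℝ) :
    ‖(WithLp.equiv 2 (Fin d → ℝ)).symm y‖ = Real.sqrt (∑ i, y i ^ 2) := by
  rw [EuclideanSpace.norm_eq]
  congr 1
  refine Finset.sum_congr rfl fun i _ => ?_
  simp [sq_abs]

lemma dot_cs {d : ℕ} (y z : Fin d → ℝ) :
    |y ⬝ᵥ z| ≤ Real.sqrt (∑ i, y i ^ 2) * Real.sqrt (∑ i, z i ^ 2) := by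
  have h := abs_real_inner_le_norm ((WithLp.equiv 2 (Fin d → ℝ)).symm y)
    ((WithLp.equiv 2 (Fin d → ℝ)).symm z)
  rw [enorm_eq, enorm_eq] at h
  convert h using 2
  rw [PiLp.inner_apply]; simp [dotProduct, mul_comm]

lemma spec_bound {d : ℕ} (N : Matrix (Fin d) (Fin d) ℝ) (u w : Fin d → ℝ) :
    |u ⬝ᵥ N.mulVec w| ≤ specNorm N * Real.sqrt (∑ i, u i ^ 2) * Real.sqrt (∑ i, w i ^ 2) := by
  have key : u ⬝ᵥ N.mulVec w =
      inner ℝ ((WithLp.equiv 2 (Fin d → ℝ)).symm u)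
        ((Matrix.toEuclideanCLM (𝕜 := ℝ) N) ((WithLp.equiv 2 (Fin d → ℝ)).symm w)) := by
    rw [PiLp.inner_apply]
    simp [dotProduct, Matrix.toLin'_apply, mul_comm]
  rw [key]
  calc |(inner ℝ ((WithLp.equiv 2 (Fin d → ℝ)).symm u)
        ((Matrix.toEuclideanCLM (𝕜 := ℝ) N) ((WithLp.equiv 2 (Fin d → ℝ)).symm w)) : ℝ)|
      ≤ ‖(WithLp.equiv 2 (Fin d → ℝ)).symm u‖ *
        ‖(Matrix.toEuclideanCLM (𝕜 := ℝ) N) ((WithLp.equiv 2 (Fin d → ℝ)).symm w)‖ :=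
        abs_real_inner_le_norm _ _
    _ ≤ ‖(WithLp.equiv 2 (Fin d → ℝ)).symm u‖ *
        (specNorm N * ‖(WithLp.equiv 2 (Fin d → ℝ)).symm w‖) := by
        gcongr
        exact (Matrix.toEuclideanCLM (𝕜 := ℝ) N).le_opNorm _
    _ = specNorm N * Real.sqrt (∑ i, u i ^ 2) * Real.sqrt (∑ i, w i ^ 2) := by
        rw [enorm_eq, enorm_eq]; ring

lemma enorm_add_le' {d : ℕ} (a b : Fin d → ℝ) :
    Real.sqrt (∑ i, (a i + b i) ^ 2) ≤
      Real.sqrt (∑ i, a i ^ 2) + Real.sqrt (∑ i, b i ^ 2) := by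
  have h := norm_add_le ((WithLp.equiv 2 (Fin d → ℝ)).symm a)
    ((WithLp.equiv 2 (Fin d → ℝ)).symm b)
  rw [enorm_eq, enorm_eq] at h
  have : (WithLp.equiv 2 (Fin d → ℝ)).symm a + (WithLp.equiv 2 (Fin d → ℝ)).symm b =
      (WithLp.equiv 2 (Fin d → ℝ)).symm (a + b) := rfl
  rw [this, enorm_eq] at h
  simpa using h

lemma sqrt_le_of_le_mul_sqrt {s a : ℝ} (hs : 0 ≤ s) (ha : 0 ≤ a)
    (h : s ≤ a * Real.sqrt s) : Real.sqrt s ≤ a := by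
  rcases eq_or_lt_of_le (Real.sqrt_nonneg s) with h0 | h0
  · simpa [← h0] using ha
  · have hss : Real.sqrt s * Real.sqrt s = s := Real.mul_self_sqrt hs
    nlinarith

lemma inv_vec_bound {d : ℕ} (M : Matrix (Fin d) (Fin d) ℝ) {c : ℝ} (hc : 0 < c)
    (h : ∀ y : Fin d → ℝ, c * ∑ i, y i ^ 2 ≤ y ⬝ᵥ M.mulVec y)
    (hM : M * M⁻¹ = 1) (z : Fin d → ℝ) :
    Real.sqrt (∑ i, (M⁻¹.mulVec z) i ^ 2) ≤ Real.sqrt (∑ i, z i ^ 2) / c := by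
  set y := M⁻¹.mulVec z with hy
  have hMz : M.mulVec y = z := by
    rw [hy, Matrix.mulVec_mulVec, hM, Matrix.one_mulVec]
  have h1 : c * ∑ i, y i ^ 2 ≤ y ⬝ᵥ z := by
    have := h y; rwa [hMz] at this
  have h2 : y ⬝ᵥ z ≤ Real.sqrt (∑ i, y i ^ 2) * Real.sqrt (∑ i, z i ^ 2) :=
    le_trans (le_abs_self _) (dot_cs y z)
  have hS : 0 ≤ ∑ i, y i ^ 2 := Finset.sum_nonneg fun i _ => sq_nonneg _
  have hss : Real.sqrt (∑ i, y i ^ 2) * Real.sqrt (∑ i, y i ^ 2) = ∑ i, y i ^ 2 :=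
    Real.mul_self_sqrt hS
  rw [le_div_iff₀ hc]
  rcases eq_or_lt_of_le (Real.sqrt_nonneg (∑ i, y i ^ 2)) with h0 | h0
  · rw [← h0, zero_mul]; exact Real.sqrt_nonneg _
  · have key : Real.sqrt (∑ i, y i ^ 2) * c * Real.sqrt (∑ i, y i ^ 2) ≤
        Real.sqrt (∑ i, z i ^ 2) * Real.sqrt (∑ i, y i ^ 2) := by nlinarith
    exact le_of_mul_le_mul_right key h0

lemma quad_vecMulVec {d : ℕ} (a y : Fin d → ℝ) :
    y ⬝ᵥ (Matrix.vecMulVec a a).mulVec y = (a ⬝ᵥ y) ^ 2 := by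
  simp only [dotProduct, Matrix.mulVec, Matrix.vecMulVec_apply, sq, dotProduct]
  rw [Finset.sum_mul_sum]
  refine Finset.sum_congr rfl fun i _ => ?_
  rw [Finset.mul_sum]
  refine Finset.sum_congr rfl fun j _ => ?_
  ring

lemma sum_mulVec' {d n : ℕ} (M : Fin n → Matrix (Fin d) (Fin d) ℝ) (y : Fin d → ℝ) :
    (∑ τ, M τ).mulVec y = ∑ τ, (M τ).mulVec y := by
  ext i
  simp only [Matrix.mulVec, dotProduct, Matrix.sum_apply, Finset.sum_apply, Finset.sum_mul]
  exact Finset.sum_comm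

lemma final_num (H E L κ sd Kr : ℝ) (hH : 0 < H) (hE : 0 < E) (hL : 0 ≤ L)
    (hκ : 0 < κ) (hKr : 1 ≤ Kr) (hsd : 1 ≤ sd)
    (hL' : Real.sqrt 2 * L ≤ Kr * (sd * Real.sqrt κ)) :
    E * (1 / (Kr * κ / (2 * H ^ 2))) *
      (Real.sqrt 2 * H ^ 2 / Real.sqrt κ + L / (Kr * κ / (2 * H ^ 2))) ≤
    4 * Real.sqrt 2 * H ^ 4 * E * sd / (κ * Real.sqrt κ * Kr) := by
  have hs2 : 0 < Real.sqrt 2 := Real.sqrt_pos.2 two_pos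
  have hsκ : 0 < Real.sqrt κ := Real.sqrt_pos.2 hκ
  have hs22 : Real.sqrt 2 ^ 2 = 2 := Real.sq_sqrt two_pos.le
  have hsκ2 : Real.sqrt κ ^ 2 = κ := Real.sq_sqrt hκ.le
  have hKr0 : 0 < Kr := lt_of_lt_of_le one_pos hKr
  set s2 := Real.sqrt 2
  set sκ := Real.sqrt κ
  have key : E * (2 * H ^ 2 / (Kr * κ)) * (s2 * H ^ 2 / sκ + 2 * H ^ 2 * L / (Kr * κ)) ≤
      4 * s2 * H ^ 4 * E * sd / (κ * sκ * Kr) := by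
    have hstep : 2 * H ^ 2 * L / (Kr * κ) ≤ s2 * H ^ 2 * sd / sκ := by
      rw [div_le_div_iff₀ (by positivity) hsκ]
      calc 2 * H ^ 2 * L * sκ = s2 ^ 2 * (H ^ 2 * L * sκ) := by rw [hs22]; ring
        _ = (s2 * H ^ 2 * sκ) * (s2 * L) := by ring
        _ ≤ (s2 * H ^ 2 * sκ) * (Kr * (sd * sκ)) := by
            have h0 : (0:ℝ) ≤ s2 * H ^ 2 * sκ := by positivity
            exact mul_le_mul_of_nonneg_left hL' h0
        _ = s2 * H ^ 2 * sd * Kr * sκ ^ 2 := by ring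
        _ = s2 * H ^ 2 * sd * (Kr * κ) := by rw [hsκ2]; ring
    calc E * (2 * H ^ 2 / (Kr * κ)) * (s2 * H ^ 2 / sκ + 2 * H ^ 2 * L / (Kr * κ))
        ≤ E * (2 * H ^ 2 / (Kr * κ)) * (s2 * H ^ 2 / sκ + s2 * H ^ 2 * sd / sκ) := by
          gcongr
      _ = 2 * s2 * H ^ 4 * E * (1 + sd) / (Kr * κ * sκ) := by
          field_simp
      _ ≤ 2 * s2 * H ^ 4 * E * (2 * sd) / (Kr * κ * sκ) := by gcongr; linarith
      _ = 4 * s2 * H ^ 4 * E * sd / (κ * sκ * Kr) := by ring_nf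
  have e1 : (1 : ℝ) / (Kr * κ / (2 * H ^ 2)) = 2 * H ^ 2 / (Kr * κ) := by
    rw [one_div_div]
  have e2 : L / (Kr * κ / (2 * H ^ 2)) = 2 * H ^ 2 * L / (Kr * κ) := by
    field_simp
  rw [e1, e2]; exact key

lemma dot_sum {d n : ℕ} (y : Fin d → ℝ) (f : Fin n → Fin d → ℝ) :
    y ⬝ᵥ (∑ τ, f τ) = ∑ τ, y ⬝ᵥ f τ := by
  simp only [dotProduct, Finset.sum_apply, Finset.mul_sum]
  exact Finset.sum_comm

set_option maxHeartbeats 1200000 in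
theorem noise_matrix_error_weighted_ridge
    {d K : ℕ} (hd : 1 ≤ d) (hK : 1 ≤ K)
    (H E L lam κ : ℝ)
    (hH : 0 < H) (hE : 0 < E) (hL : 0 ≤ L) (hlam : 0 ≤ lam) (hκ : 0 < κ)
    (hKlarge : Real.sqrt 2 * L / Real.sqrt (d * κ) ≤ (K : ℝ))
    (x : Fin K → Fin d → ℝ) (hx : ∀ τ, Real.sqrt (∑ i, x τ i ^ 2) ≤ 1)
    (σ : Fin K → ℝ) (hσ : ∀ τ, 1 ≤ σ τ)
    (v : Fin K → ℝ) (hv : ∀ τ, |v τ| ≤ H)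
    (ψ : Fin d → ℝ) (hψ : Real.sqrt (∑ i, ψ i ^ 2) ≤ L)
    (φ : Fin d → ℝ) (hφ : Real.sqrt (∑ i, φ i ^ 2) ≤ 1)
    (N : Matrix (Fin d) (Fin d) ℝ) (hN : N.PosSemidef) (hNE : specNorm N ≤ E)
    (hmin : ∀ y : Fin d → ℝ,
      (K : ℝ) * κ / (2 * H ^ 2) * ∑ i, y i ^ 2 ≤ y ⬝ᵥ (gramHat x σ lam).mulVec y) :
    |φ ⬝ᵥ ((gramHat x σ lam)⁻¹ - (gramHat x σ lam + N)⁻¹).mulVec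
        ((∑ τ, (v τ / σ τ ^ 2) • x τ) + ψ)| ≤
      4 * Real.sqrt 2 * H ^ 4 * E * Real.sqrt d / (Real.sqrt (κ ^ 3) * K) := by
  have hK0 : (0:ℝ) < K := by exact_mod_cast hK
  have hd0 : (0:ℝ) < d := by exact_mod_cast hd
  set A := gramHat x σ lam with hA_def
  set Λ := A + N with hΛ_def
  set c : ℝ := (K : ℝ) * κ / (2 * H ^ 2) with hc_def
  have hc : 0 < c := by positivity
  -- Hermitian structure
  have hvmv : ∀ τ, (Matrix.vecMulVec (x τ) (x τ))ᴴ = Matrix.vecMulVec (x τ) (x τ) := by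
    intro τ; ext i j
    simp [Matrix.conjTranspose_apply, Matrix.vecMulVec_apply, mul_comm]
  have hvmvT : ∀ τ, (Matrix.vecMulVec (x τ) (x τ))ᵀ = Matrix.vecMulVec (x τ) (x τ) := by
    intro τ; ext i j
    simp [Matrix.transpose_apply, Matrix.vecMulVec_apply, mul_comm]
  have hA_herm : A.IsHermitian := by
    show Aᴴ = A
    rw [hA_def]; unfold gramHat
    rw [Matrix.conjTranspose_add, Matrix.conjTranspose_smul, Matrix.conjTranspose_one,
      Matrix.conjTranspose_sum]
    simp [Matrix.conjTranspose_smul, hvmv, hvmvT]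
  -- quadratic form lower bounds
  have hminA : ∀ y : Fin d → ℝ, c * ∑ i, y i ^ 2 ≤ y ⬝ᵥ A.mulVec y := hmin
  have hNpos : ∀ y : Fin d → ℝ, 0 ≤ y ⬝ᵥ N.mulVec y := by
    intro y; simpa using hN.dotProduct_mulVec_nonneg y
  have hminΛ : ∀ y : Fin d → ℝ, c * ∑ i, y i ^ 2 ≤ y ⬝ᵥ Λ.mulVec y := by
    intro y
    rw [hΛ_def, Matrix.add_mulVec, dotProduct_add]
    linarith [hminA y, hNpos y]
  have posdef_of : ∀ (M : Matrix (Fin d) (Fin d) ℝ), M.IsHermitian →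
      (∀ y : Fin d → ℝ, c * ∑ i, y i ^ 2 ≤ y ⬝ᵥ M.mulVec y) → M.PosDef := by
    intro M hherm hq
    refine Matrix.PosDef.of_dotProduct_mulVec_pos hherm fun y hy => ?_
    rw [star_trivial]
    refine lt_of_lt_of_le ?_ (hq y)
    obtain ⟨i, hi⟩ := Function.ne_iff.1 hy
    have hpos : 0 < ∑ i, y i ^ 2 :=
      Finset.sum_pos' (fun j _ => sq_nonneg _)
        ⟨i, Finset.mem_univ i, lt_of_le_of_ne (sq_nonneg _) (Ne.symm (pow_ne_zero 2 hi))⟩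
    positivity
  have hA_pd := posdef_of A hA_herm hminA
  have hΛ_herm : Λ.IsHermitian := hA_herm.add hN.1
  have hΛ_pd := posdef_of Λ hΛ_herm hminΛ
  have hAinv : A * A⁻¹ = 1 := Matrix.mul_nonsing_inv _ hA_pd.det_pos.ne'.isUnit
  have hΛinv : Λ * Λ⁻¹ = 1 := Matrix.mul_nonsing_inv _ hΛ_pd.det_pos.ne'.isUnit
  have hΛinv' : Λ⁻¹ * Λ = 1 := Matrix.nonsing_inv_mul _ hΛ_pd.det_pos.ne'.isUnit
  -- key identity
  have hid : A⁻¹ - Λ⁻¹ = Λ⁻¹ * N * A⁻¹ := by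
    have hNid : N = Λ - A := by rw [hΛ_def]; exact (add_sub_cancel_left A N).symm
    calc A⁻¹ - Λ⁻¹ = Λ⁻¹ * Λ * A⁻¹ - Λ⁻¹ * (A * A⁻¹) := by
          rw [hΛinv', hAinv, one_mul, mul_one]
      _ = Λ⁻¹ * (Λ - A) * A⁻¹ := by noncomm_ring
      _ = Λ⁻¹ * N * A⁻¹ := by rw [← hNid]
  set b₀ : Fin d → ℝ := ∑ τ, (v τ / σ τ ^ 2) • x τ with hb₀_def
  set w₀ : Fin d → ℝ := A⁻¹.mulVec b₀ with hw₀_def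
  set wψ : Fin d → ℝ := A⁻¹.mulVec ψ with hwψ_def
  set u : Fin d → ℝ := Λ⁻¹.mulVec φ with hu_def
  -- rewrite the target scalar
  have hΛsymm : Λ⁻¹ᵀ = Λ⁻¹ := by
    have h := hΛ_herm.inv
    simpa [Matrix.IsHermitian, Matrix.conjTranspose_eq_transpose_of_trivial] using h
  have hval : φ ⬝ᵥ (A⁻¹ - Λ⁻¹).mulVec (b₀ + ψ) = u ⬝ᵥ N.mulVec (w₀ + wψ) := by
    rw [hid]
    have h1 : (Λ⁻¹ * N * A⁻¹).mulVec (b₀ + ψ) =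
        Λ⁻¹.mulVec (N.mulVec (A⁻¹.mulVec (b₀ + ψ))) := by
      rw [Matrix.mulVec_mulVec, Matrix.mulVec_mulVec]
    have hvm : φ ᵥ* Λ⁻¹ = Λ⁻¹.mulVec φ := by
      conv_lhs => rw [← hΛsymm]
      exact Matrix.vecMul_transpose _ _
    rw [h1, Matrix.dotProduct_mulVec, hvm, Matrix.mulVec_add]
  -- norm bounds from the inverse
  have hbu : Real.sqrt (∑ i, u i ^ 2) ≤ 1 / c := by
    calc Real.sqrt (∑ i, u i ^ 2) ≤ Real.sqrt (∑ i, φ i ^ 2) / c :=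
          inv_vec_bound Λ hc hminΛ hΛinv φ
      _ ≤ 1 / c := by gcongr
  have hbψ : Real.sqrt (∑ i, wψ i ^ 2) ≤ L / c := by
    calc Real.sqrt (∑ i, wψ i ^ 2) ≤ Real.sqrt (∑ i, ψ i ^ 2) / c :=
          inv_vec_bound A hc hminA hAinv ψ
      _ ≤ L / c := by gcongr
  -- self-normalized bound for w₀
  have hAw₀ : A.mulVec w₀ = b₀ := by
    rw [hw₀_def, Matrix.mulVec_mulVec, hAinv, Matrix.one_mulVec]
  set s : ℝ := w₀ ⬝ᵥ b₀ with hs_def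
  have hsA : w₀ ⬝ᵥ A.mulVec w₀ = s := by rw [hAw₀]
  have hs0' : c * ∑ i, w₀ i ^ 2 ≤ s := by rw [← hsA]; exact hminA w₀
  have hsum0 : (0:ℝ) ≤ ∑ i, w₀ i ^ 2 := Finset.sum_nonneg fun i _ => sq_nonneg _
  have hs0 : 0 ≤ s := le_trans (by positivity) hs0'
  have hq1 : w₀ ⬝ᵥ (∑ τ, (σ τ ^ 2)⁻¹ • Matrix.vecMulVec (x τ) (x τ)).mulVec w₀
      = ∑ τ, (σ τ ^ 2)⁻¹ * (x τ ⬝ᵥ w₀) ^ 2 := by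
    rw [sum_mulVec', dot_sum]
    refine Finset.sum_congr rfl fun τ _ => ?_
    rw [Matrix.smul_mulVec, dotProduct_smul, quad_vecMulVec]
    simp [smul_eq_mul]
  have hq : ∑ τ, (σ τ ^ 2)⁻¹ * (x τ ⬝ᵥ w₀) ^ 2 ≤ s := by
    have h2 : w₀ ⬝ᵥ A.mulVec w₀
        = (∑ τ, (σ τ ^ 2)⁻¹ * (x τ ⬝ᵥ w₀) ^ 2) + lam * ∑ i, w₀ i ^ 2 := by
      rw [hA_def]
      show w₀ ⬝ᵥ ((∑ τ, (σ τ ^ 2)⁻¹ • Matrix.vecMulVec (x τ) (x τ)) +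
        lam • (1 : Matrix (Fin d) (Fin d) ℝ)).mulVec w₀ = _
      rw [Matrix.add_mulVec, dotProduct_add, hq1]
      congr 1
      rw [Matrix.smul_mulVec, Matrix.one_mulVec, dotProduct_smul, smul_eq_mul]
      congr 1
      simp [dotProduct, sq]
    have hlam0 : 0 ≤ lam * ∑ i, w₀ i ^ 2 := mul_nonneg hlam hsum0
    linarith [hsA, h2]
  have hq' : ∑ τ, (|x τ ⬝ᵥ w₀| / σ τ) ^ 2 ≤ s := by
    refine le_trans (le_of_eq ?_) hq
    refine Finset.sum_congr rfl fun τ _ => ?_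
    rw [div_pow, sq_abs, div_eq_inv_mul]
  have hn1 : ∑ τ, ((σ τ)⁻¹) ^ 2 ≤ (K : ℝ) := by
    calc ∑ τ, ((σ τ)⁻¹) ^ 2 ≤ ∑ _τ : Fin K, (1:ℝ) := by
          refine Finset.sum_le_sum fun τ _ => ?_
          have hσ0 : (0:ℝ) < σ τ := lt_of_lt_of_le one_pos (hσ τ)
          have hinv : (σ τ)⁻¹ ≤ 1 := by
            rw [inv_le_one_iff₀]; right; exact hσ τ
          have hinv0 : (0:ℝ) ≤ (σ τ)⁻¹ := by positivity
          nlinarith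
      _ = (K : ℝ) := by simp
  have hCS : s ≤ H * (Real.sqrt K * Real.sqrt s) := by
    set p : Fin K → ℝ := fun τ => (σ τ)⁻¹ with hp_def
    set q : Fin K → ℝ := fun τ => |x τ ⬝ᵥ w₀| / σ τ with hq_def
    have hsb : s = ∑ τ, (v τ / σ τ ^ 2) * (x τ ⬝ᵥ w₀) := by
      rw [hs_def, hb₀_def, dot_sum]
      refine Finset.sum_congr rfl fun τ _ => ?_
      rw [dotProduct_smul, smul_eq_mul, dotProduct_comm]
    have hterm : ∀ τ, (v τ / σ τ ^ 2) * (x τ ⬝ᵥ w₀) ≤ H * (p τ * q τ) := by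
      intro τ
      have hσ0 : (0:ℝ) < σ τ := lt_of_lt_of_le one_pos (hσ τ)
      have h1 : (v τ / σ τ ^ 2) * (x τ ⬝ᵥ w₀) ≤ |v τ| / σ τ ^ 2 * |x τ ⬝ᵥ w₀| := by
        calc (v τ / σ τ ^ 2) * (x τ ⬝ᵥ w₀) ≤ |(v τ / σ τ ^ 2) * (x τ ⬝ᵥ w₀)| := le_abs_self _
          _ = |v τ| / σ τ ^ 2 * |x τ ⬝ᵥ w₀| := by
              rw [abs_mul, abs_div, abs_of_pos (by positivity : (0:ℝ) < σ τ ^ 2)]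
      have h2 : |v τ| / σ τ ^ 2 * |x τ ⬝ᵥ w₀| ≤ H / σ τ ^ 2 * |x τ ⬝ᵥ w₀| := by
        gcongr
        exact hv τ
      have h3 : H / σ τ ^ 2 * |x τ ⬝ᵥ w₀| = H * (p τ * q τ) := by
        simp only [hp_def, hq_def]
        rw [div_eq_mul_inv, div_eq_mul_inv, sq, mul_inv]
        ring
      linarith
    calc s = ∑ τ, (v τ / σ τ ^ 2) * (x τ ⬝ᵥ w₀) := hsb
      _ ≤ ∑ τ, H * (p τ * q τ) := Finset.sum_le_sum fun τ _ => hterm τ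
      _ = H * (p ⬝ᵥ q) := by rw [← Finset.mul_sum]; rfl
      _ ≤ H * |p ⬝ᵥ q| := mul_le_mul_of_nonneg_left (le_abs_self _) hH.le
      _ ≤ H * (Real.sqrt (∑ τ, p τ ^ 2) * Real.sqrt (∑ τ, q τ ^ 2)) :=
          mul_le_mul_of_nonneg_left (dot_cs p q) hH.le
      _ ≤ H * (Real.sqrt K * Real.sqrt s) := by
          have hpb : Real.sqrt (∑ τ, p τ ^ 2) ≤ Real.sqrt (K : ℝ) := Real.sqrt_le_sqrt hn1
          have hqb : Real.sqrt (∑ τ, q τ ^ 2) ≤ Real.sqrt s := Real.sqrt_le_sqrt hq'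
          have h0 : (0:ℝ) ≤ Real.sqrt (∑ τ, q τ ^ 2) := Real.sqrt_nonneg _
          have h1 : (0:ℝ) ≤ Real.sqrt (K : ℝ) := Real.sqrt_nonneg _
          exact mul_le_mul_of_nonneg_left
            (mul_le_mul hpb hqb h0 h1) hH.le
  have hsqrt_s : Real.sqrt s ≤ H * Real.sqrt (K : ℝ) := by
    refine sqrt_le_of_le_mul_sqrt hs0 (by positivity) ?_
    calc s ≤ H * (Real.sqrt (K : ℝ) * Real.sqrt s) := hCS
      _ = H * Real.sqrt (K : ℝ) * Real.sqrt s := by ring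
  have hs_le : s ≤ H ^ 2 * K := by
    have h1 : Real.sqrt s * Real.sqrt s = s := Real.mul_self_sqrt hs0
    have h2 : Real.sqrt (K : ℝ) ^ 2 = (K : ℝ) := Real.sq_sqrt hK0.le
    nlinarith [Real.sqrt_nonneg s, Real.sqrt_nonneg (K : ℝ)]
  have hw₀sum : ∑ i, w₀ i ^ 2 ≤ 2 * H ^ 4 / κ := by
    rw [hc_def, div_mul_eq_mul_div, div_le_iff₀ (by positivity : (0:ℝ) < 2 * H ^ 2)] at hs0'
    rw [le_div_iff₀ hκ]
    nlinarith [mul_le_mul_of_nonneg_left hs_le (by positivity : (0:ℝ) ≤ 2 * H ^ 2), hK0]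
  have hbw₀ : Real.sqrt (∑ i, w₀ i ^ 2) ≤ Real.sqrt 2 * H ^ 2 / Real.sqrt κ := by
    refine le_trans (Real.sqrt_le_sqrt hw₀sum) ?_
    have he : 2 * H ^ 4 / κ = (Real.sqrt 2 * H ^ 2 / Real.sqrt κ) ^ 2 := by
      rw [div_pow, mul_pow, Real.sq_sqrt two_pos.le, Real.sq_sqrt hκ.le]; ring
    rw [he, Real.sqrt_sq (by positivity)]
  have hwsum : Real.sqrt (∑ i, (w₀ i + wψ i) ^ 2) ≤
      Real.sqrt 2 * H ^ 2 / Real.sqrt κ + L / c :=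
    le_trans (enorm_add_le' w₀ wψ) (add_le_add hbw₀ hbψ)
  have hmain : |φ ⬝ᵥ (A⁻¹ - Λ⁻¹).mulVec (b₀ + ψ)| ≤
      E * (1 / c) * (Real.sqrt 2 * H ^ 2 / Real.sqrt κ + L / c) := by
    rw [hval]
    calc |u ⬝ᵥ N.mulVec (w₀ + wψ)|
        ≤ specNorm N * Real.sqrt (∑ i, u i ^ 2) * Real.sqrt (∑ i, (w₀ + wψ) i ^ 2) :=
          spec_bound N u (w₀ + wψ)
      _ ≤ E * (1 / c) * (Real.sqrt 2 * H ^ 2 / Real.sqrt κ + L / c) := by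
          have h1 : Real.sqrt (∑ i, (w₀ + wψ) i ^ 2) ≤
              Real.sqrt 2 * H ^ 2 / Real.sqrt κ + L / c := by
            simpa [Pi.add_apply] using hwsum
          have hspec0 : 0 ≤ specNorm N := norm_nonneg _
          have hs1 : (0:ℝ) ≤ Real.sqrt (∑ i, u i ^ 2) := Real.sqrt_nonneg _
          have hs2 : (0:ℝ) ≤ Real.sqrt (∑ i, (w₀ + wψ) i ^ 2) := Real.sqrt_nonneg _
          have hc1 : (0:ℝ) ≤ 1 / c := by positivity
          exact mul_le_mul (mul_le_mul hNE hbu hs1 hE.le) h1 hs2 (by positivity)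
  -- numeric conclusion
  have hL' : Real.sqrt 2 * L ≤ (K : ℝ) * (Real.sqrt d * Real.sqrt κ) := by
    have hdk : (0:ℝ) < Real.sqrt ((d : ℝ) * κ) := Real.sqrt_pos.2 (by positivity)
    have h := (div_le_iff₀ hdk).1 hKlarge
    rwa [Real.sqrt_mul (by positivity : (0:ℝ) ≤ (d : ℝ))] at h
  have hsd1 : (1:ℝ) ≤ Real.sqrt d := by
    rw [show (1:ℝ) = Real.sqrt 1 from Real.sqrt_one.symm]
    exact Real.sqrt_le_sqrt (by exact_mod_cast hd)
  have hκ3 : Real.sqrt (κ ^ 3) = κ * Real.sqrt κ := by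
    rw [show κ ^ 3 = κ ^ 2 * κ by ring, Real.sqrt_mul (sq_nonneg κ), Real.sqrt_sq hκ.le]
  refine le_trans hmain ?_
  rw [hκ3, hc_def]
  exact final_num H E L κ (Real.sqrt d) (K : ℝ) hH hE hL hκ (by exact_mod_cast hK) hsd1 hL'
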